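/- Let x ∼ N(0, I_d), fix k ≥ 2, and for gating parameters w = (w_1, …, w_{k−1}) ∈ (ℝ^d)^{k−1} with w_k := 0 define the softmax probabilities p_i(x) := exp(⟨w_i, x⟩)/Σ_{j=1}^k exp(⟨w_j, x⟩). Then there exists λ > 0 such that for all w with ‖w_i‖₂ ≤ 1 for every i ∈ [k−1], and all (a_1, …, a_{k−1}) ∈ (ℝ^d)^{k−1} with Σ_{i=1}^{k−1} ‖a_i‖₂² = 1, E[ Σ_{i=1}^{k−1} p_i(x)(1 − p_i(x)) ⟨a_i, x⟩² − Σ_{i ≠ j, i,j ∈ [k−1]} p_i(x) p_j(x) ⟨a_i, x⟩⟨a_j, x⟩ ] ≥ λ. In particular, the negative Hessian of the population EM surrogate Q(·|w*) for the k-expert gating update is uniformly positive definite over the domain Ω = {w : ‖w_i‖₂ ≤ 1 ∀i}. -/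

import Mathlib

open MeasureTheory ProbabilityTheory Finset

noncomputable section

/-- Euclidean dot product on `Fin d → ℝ`. -/
def dot {d : ℕ} (u v : Fin d → ℝ) : ℝ := ∑ j, u j * v j

/-- Standard Gaussian measure `N(0, I_d)` on `Fin d → ℝ`. -/
def stdGaussian (d : ℕ) : Measure (Fin d → ℝ) :=
  Measure.pi fun _ => gaussianReal 0 1

/-- Softmax gating probabilities. -/
def softmax {d m : ℕ} (w : Fin m → Fin d → ℝ) (i : Fin m) (x : Fin d → ℝ) : ℝ :=
  Real.exp (dot (w i) x) / ∑ j, Real.exp (dot (w j) x)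

/-- Softmax probability of expert `i ∈ [k]` (`k = m+1`) for gating parameters
`w₁,…,w_m` with `w_k := 0`. -/
def softmaxP {d m : ℕ} (w : Fin m → Fin d → ℝ) (i : Fin (m + 1)) (x : Fin d → ℝ) : ℝ :=
  softmax (Fin.snoc w 0) i x

/- ===== auxiliary lemmas ===== -/

abbrev gam : Measure ℝ := gaussianReal 0 1

lemma gauss_pi_integral {d : ℕ} (f : Fin d → ℝ → ℝ) :
    ∫ x : Fin d → ℝ, ∏ i, f i (x i) ∂(stdGaussian d) = ∏ i, ∫ t, f i t ∂(gaussianReal 0 1) := by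
  letI : MeasureSpace ℝ := ⟨gaussianReal 0 1⟩
  haveI : SigmaFinite (volume : Measure ℝ) := inferInstanceAs (SigmaFinite (gaussianReal 0 1))
  exact integral_fintype_prod_eq_prod (ι := Fin d) (fun i => f i)

lemma gauss_pi_integrable {d : ℕ} {f : Fin d → ℝ → ℝ}
    (hf : ∀ i, Integrable (f i) (gaussianReal 0 1)) :
    Integrable (fun x : Fin d → ℝ => ∏ i, f i (x i)) (stdGaussian d) := by
  letI : MeasureSpace ℝ := ⟨gaussianReal 0 1⟩
  haveI : SigmaFinite (volume : Measure ℝ) := inferInstanceAs (SigmaFinite (gaussianReal 0 1))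
  exact Integrable.fintype_prod hf


/-- bounded continuous functions are integrable wrt the Gaussian. -/
lemma integrable_of_le_one {f : ℝ → ℝ} (hc : Continuous f) (h : ∀ t, |f t| ≤ 1) :
    Integrable f gam := by
  refine Integrable.mono' (integrable_const 1) hc.aestronglyMeasurable ?_
  filter_upwards with t
  simpa [Real.norm_eq_abs] using h t

lemma abs_le_exp_two_abs (t : ℝ) : |t| ≤ Real.exp (2 * |t|) := by
  have h := Real.add_one_le_exp (2 * |t|)
  have : |t| ≤ 2 * |t| + 1 := by nlinarith [abs_nonneg t]
  linarith

lemma sq_le_exp_four_abs (t : ℝ) : t ^ 2 ≤ Real.exp (4 * |t|) := by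
  have h := abs_le_exp_two_abs t
  have h2 : |t| ^ 2 ≤ (Real.exp (2 * |t|)) ^ 2 := by
    exact pow_le_pow_left₀ (abs_nonneg t) h 2
  calc t ^ 2 = |t| ^ 2 := (sq_abs t).symm
    _ ≤ (Real.exp (2 * |t|)) ^ 2 := h2
    _ = Real.exp (4 * |t|) := by rw [← Real.exp_nat_mul]; ring_nf

def phi (t : ℝ) : ℝ := Real.exp (-(4 * |t|))

lemma phi_pos (t : ℝ) : 0 < phi t := Real.exp_pos _
lemma phi_le_one (t : ℝ) : phi t ≤ 1 := Real.exp_le_one_iff.mpr (by nlinarith [abs_nonneg t])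

lemma phi_cont : Continuous phi := by
  unfold phi; fun_prop

lemma integrable_phi : Integrable phi gam :=
  integrable_of_le_one phi_cont fun t => by
    rw [abs_of_pos (phi_pos t)]; exact phi_le_one t

lemma phi_mul_sq_le_one (t : ℝ) : phi t * t ^ 2 ≤ 1 := by
  have h := sq_le_exp_four_abs t
  have : phi t * t ^ 2 ≤ phi t * Real.exp (4 * |t|) :=
    mul_le_mul_of_nonneg_left h (phi_pos t).le
  calc phi t * t ^ 2 ≤ phi t * Real.exp (4 * |t|) := this
    _ = 1 := by rw [phi, ← Real.exp_add]; simp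

lemma integrable_phi_sq : Integrable (fun t => phi t * t ^ 2) gam :=
  integrable_of_le_one (by unfold phi; fun_prop) fun t => by
    rw [abs_of_nonneg (mul_nonneg (phi_pos t).le (sq_nonneg t))]; exact phi_mul_sq_le_one t

lemma integrable_phi_id : Integrable (fun t => phi t * t) gam := by
  refine integrable_of_le_one (by unfold phi; fun_prop) fun t => ?_
  have h1 : |phi t * t| = phi t * |t| := by
    rw [abs_mul, abs_of_pos (phi_pos t)]
  rw [h1]
  have := abs_le_exp_two_abs t
  calc phi t * |t| ≤ phi t * Real.exp (4 * |t|) := by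
        refine mul_le_mul_of_nonneg_left ?_ (phi_pos t).le
        refine this.trans (Real.exp_le_exp.mpr (by nlinarith [abs_nonneg t]))
    _ = 1 := by rw [phi, ← Real.exp_add]; simp

/-- Gaussian is symmetric under negation. -/
lemma gam_map_neg : gam.map (fun t => -t) = gam := by
  have : (fun t : ℝ => -t) = (fun t : ℝ => (-1 : ℝ) * t) := by funext t; ring
  rw [this]
  have h := gaussianReal_map_const_mul (μ := 0) (v := 1) (-1 : ℝ)
  simp only [mul_zero] at h
  convert h using 2
  ext
  norm_num

/-- odd gaussMomentPhi vanishes -/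
lemma integral_phi_id_zero : ∫ t, phi t * t ∂gam = 0 := by
  have hmeas : AEStronglyMeasurable (fun t => phi t * t) gam :=
    (by unfold phi; fun_prop : Continuous fun t => phi t * t).aestronglyMeasurable
  have h : ∫ t, phi t * t ∂gam = ∫ t, phi (-t) * (-t) ∂gam := by
    conv_lhs => rw [← gam_map_neg]
    rw [integral_map (measurable_neg).aemeasurable]
    rw [gam_map_neg]; exact hmeas
  have h2 : ∀ t : ℝ, phi (-t) * (-t) = -(phi t * t) := by
    intro t; simp [phi, abs_neg]
  simp only [h2, integral_neg] at h
  linarith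

def Cg : ℝ := ∫ t, phi t ∂gam
def cg : ℝ := ∫ t, phi t * t ^ 2 ∂gam

lemma gam_compl_zero : gam ({(0:ℝ)}ᶜ) = 1 := by
  have h0 : gam {(0:ℝ)} = 0 :=
    gaussianReal_absolutelyContinuous 0 one_ne_zero (measure_singleton 0)
  rw [measure_compl (measurableSet_singleton 0) (measure_ne_top _ _), h0]
  simp

lemma Cg_pos : 0 < Cg := by
  rw [Cg]
  rw [integral_pos_iff_support_of_nonneg (fun t => (phi_pos t).le) integrable_phi]
  have : Function.support phi = Set.univ := by
    ext t; simp [Function.support, (phi_pos t).ne']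
  rw [this]
  simp

lemma Cg_le_one : Cg ≤ 1 := by
  have := integral_mono integrable_phi (integrable_const 1) (fun t => phi_le_one t)
  simpa [Cg] using this

lemma cg_pos : 0 < cg := by
  rw [cg]
  rw [integral_pos_iff_support_of_nonneg
    (fun t => mul_nonneg (phi_pos t).le (sq_nonneg t)) integrable_phi_sq]
  have : Function.support (fun t => phi t * t ^ 2) = {(0:ℝ)}ᶜ := by
    ext t
    simp [Function.support, (phi_pos t).ne', pow_eq_zero_iff]
  rw [this, gam_compl_zero]
  norm_num

lemma integrable_sq_gam : Integrable (fun t : ℝ => t ^ 2) gam := by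
  have h : gam = volume.withDensity (gaussianPDF 0 1) :=
    gaussianReal_of_var_ne_zero 0 one_ne_zero
  rw [h, integrable_withDensity_iff (measurable_gaussianPDF 0 1)
    (ae_of_all _ fun x => ENNReal.ofReal_lt_top)]
  have heq : ∀ t : ℝ, t ^ 2 * (gaussianPDF 0 1 t).toReal
      = (√(2 * Real.pi))⁻¹ * (t ^ 2 * Real.exp (-(1/2) * t ^ 2)) := by
    intro t
    rw [gaussianPDF, ENNReal.toReal_ofReal (gaussianPDFReal_nonneg _ _ _)]
    simp only [gaussianPDFReal]
    push_cast
    rw [mul_one, sub_zero]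
    ring_nf
  simp only [heq]
  have := integrable_rpow_mul_exp_neg_mul_sq (b := 1/2) (by norm_num) (s := 2) (by norm_num)
  have h2 : (fun x : ℝ => x ^ (2:ℝ) * Real.exp (-(1/2) * x ^ 2))
      = fun x : ℝ => x ^ 2 * Real.exp (-(1/2) * x ^ 2) := by
    funext x; rw [show (2:ℝ) = ((2:ℕ):ℝ) by norm_num, Real.rpow_natCast]
  rw [h2] at this
  exact this.const_mul _

lemma integrable_id_gam : Integrable (fun t : ℝ => t) gam := by
  refine Integrable.mono' (((integrable_const (1:ℝ)).add integrable_sq_gam).div_const 2)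
    (continuous_id.aestronglyMeasurable) ?_
  filter_upwards with t
  have : ‖t‖ = |t| := Real.norm_eq_abs t
  rw [this]
  simp only [Pi.add_apply]
  nlinarith [abs_nonneg t, sq_abs t, sq_nonneg (|t| - 1)]

variable {d : ℕ}

lemma integrable_mul_coord (j l : Fin d) :
    Integrable (fun x : Fin d → ℝ => x j * x l) (stdGaussian d) := by
  have h : (fun x : Fin d → ℝ => x j * x l)
      = fun x => ∏ r, ((if r = j then x r else 1) * (if r = l then x r else 1)) := by
    funext x
    rw [Finset.prod_mul_distrib]
    simp [Finset.prod_ite_eq']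
  rw [h]
  refine gauss_pi_integrable
    (f := fun r t => (if r = j then t else 1) * (if r = l then t else 1)) fun r => ?_
  by_cases hj : r = j <;> by_cases hl : r = l
  · have he : (fun t : ℝ => (if r = j then t else 1) * (if r = l then t else 1))
        = fun t : ℝ => t ^ 2 := by funext t; rw [if_pos hj, if_pos hl]; ring
    rw [he]; exact integrable_sq_gam
  · have he : (fun t : ℝ => (if r = j then t else 1) * (if r = l then t else 1))
        = fun t : ℝ => t := by funext t; rw [if_pos hj, if_neg hl]; ring
    rw [he]; exact integrable_id_gam
  · have he : (fun t : ℝ => (if r = j then t else 1) * (if r = l then t else 1))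
        = fun t : ℝ => t := by funext t; rw [if_neg hj, if_pos hl]; ring
    rw [he]; exact integrable_id_gam
  · have he : (fun t : ℝ => (if r = j then t else 1) * (if r = l then t else 1))
        = fun t : ℝ => 1 := by funext t; rw [if_neg hj, if_neg hl]; ring
    rw [he]; exact integrable_const 1

lemma dot_sq_expand (u : Fin d → ℝ) (x : Fin d → ℝ) :
    (dot u x) ^ 2 = ∑ j, ∑ l, (u j * u l) * (x j * x l) := by
  rw [dot, sq, Finset.sum_mul_sum]
  exact Finset.sum_congr rfl fun j _ => Finset.sum_congr rfl fun l _ => by ring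

lemma integrable_dot_sq (u : Fin d → ℝ) :
    Integrable (fun x : Fin d → ℝ => (dot u x) ^ 2) (stdGaussian d) := by
  have h : (fun x : Fin d → ℝ => (dot u x) ^ 2)
      = fun x => ∑ j, ∑ l, (u j * u l) * (x j * x l) := funext fun x => dot_sq_expand u x
  rw [h]
  exact integrable_finset_sum _ fun j _ => integrable_finset_sum _ fun l _ =>
    (integrable_mul_coord j l).const_mul _

def psi (j l r : Fin d) (t : ℝ) : ℝ :=
  phi t * ((if r = j then t else 1) * (if r = l then t else 1))

lemma psi_prod (j l : Fin d) (x : Fin d → ℝ) :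
    (∏ r, phi (x r)) * (x j * x l) = ∏ r, psi j l r (x r) := by
  unfold psi
  rw [Finset.prod_mul_distrib, Finset.prod_mul_distrib]
  simp [Finset.prod_ite_eq']

lemma integrable_psi (j l r : Fin d) : Integrable (psi j l r) gam := by
  by_cases hj : r = j <;> by_cases hl : r = l
  · have he : psi j l r = fun t => phi t * t ^ 2 := by
      funext t; unfold psi; rw [if_pos hj, if_pos hl]; ring
    rw [he]; exact integrable_phi_sq
  · have he : psi j l r = fun t => phi t * t := by
      funext t; unfold psi; rw [if_pos hj, if_neg hl]; ring
    rw [he]; exact integrable_phi_id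
  · have he : psi j l r = fun t => phi t * t := by
      funext t; unfold psi; rw [if_neg hj, if_pos hl]; ring
    rw [he]; exact integrable_phi_id
  · have he : psi j l r = phi := by
      funext t; unfold psi; rw [if_neg hj, if_neg hl]; ring
    rw [he]; exact integrable_phi

lemma integrable_phi_mul_coord (j l : Fin d) :
    Integrable (fun x : Fin d → ℝ => (∏ r, phi (x r)) * (x j * x l)) (stdGaussian d) := by
  have h : (fun x : Fin d → ℝ => (∏ r, phi (x r)) * (x j * x l))
      = fun x => ∏ r, psi j l r (x r) := funext fun x => psi_prod j l x
  rw [h]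
  exact gauss_pi_integrable fun r => integrable_psi j l r

lemma I_offdiag {j l : Fin d} (hjl : j ≠ l) :
    ∫ x, (∏ r, phi (x r)) * (x j * x l) ∂(stdGaussian d) = 0 := by
  simp only [psi_prod j l]
  rw [gauss_pi_integral]
  refine Finset.prod_eq_zero (mem_univ j) ?_
  have : ∀ t, psi j l j t = phi t * t := by
    intro t; unfold psi; rw [if_pos rfl, if_neg hjl]; ring
  simp only [this]
  exact integral_phi_id_zero

lemma I_diag (j : Fin d) :
    ∫ x, (∏ r, phi (x r)) * (x j * x j) ∂(stdGaussian d) = cg * Cg ^ (d - 1) := by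
  simp only [psi_prod j j]
  rw [gauss_pi_integral]
  have hval : ∀ r, ∫ t, psi j j r t ∂gam = if r = j then cg else Cg := by
    intro r
    by_cases h : r = j
    · rw [if_pos h]
      have : ∀ t, psi j j r t = phi t * t ^ 2 := by
        intro t; unfold psi; rw [if_pos h]; ring
      simp only [this]; rfl
    · rw [if_neg h]
      have : ∀ t, psi j j r t = phi t := by
        intro t; unfold psi; rw [if_neg h]; ring
      simp only [this]; rfl
  simp only [hval]
  rw [← Finset.mul_prod_erase univ _ (mem_univ j), if_pos rfl]
  congr 1
  rw [Finset.prod_congr rfl (fun r hr => if_neg (Finset.ne_of_mem_erase hr)),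
    Finset.prod_const, Finset.card_erase_of_mem (mem_univ j), Finset.card_univ,
    Fintype.card_fin]

lemma gaussMomentPhi (a : Fin d → ℝ) :
    ∫ x, (∏ r, phi (x r)) * (dot a x) ^ 2 ∂(stdGaussian d)
      = (∑ j, (a j) ^ 2) * (cg * Cg ^ (d - 1)) := by
  have h : (fun x : Fin d → ℝ => (∏ r, phi (x r)) * (dot a x) ^ 2)
      = fun x => ∑ j, ∑ l, (a j * a l) * ((∏ r, phi (x r)) * (x j * x l)) := by
    funext x
    rw [dot_sq_expand, Finset.mul_sum]
    refine Finset.sum_congr rfl fun j _ => ?_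
    rw [Finset.mul_sum]
    exact Finset.sum_congr rfl fun l _ => by ring
  rw [h]
  rw [integral_finset_sum _ fun j _ => integrable_finset_sum _ fun l _ =>
    (integrable_phi_mul_coord j l).const_mul _]
  have h2 : ∀ j : Fin d, ∫ x, ∑ l, (a j * a l) * ((∏ r, phi (x r)) * (x j * x l))
      ∂(stdGaussian d) = (a j) ^ 2 * (cg * Cg ^ (d - 1)) := by
    intro j
    rw [integral_finset_sum _ fun l _ => (integrable_phi_mul_coord j l).const_mul _]
    have h3 : ∀ l : Fin d, ∫ x, (a j * a l) * ((∏ r, phi (x r)) * (x j * x l))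
        ∂(stdGaussian d) = if l = j then (a j) ^ 2 * (cg * Cg ^ (d - 1)) else 0 := by
      intro l
      rw [MeasureTheory.integral_const_mul]
      by_cases h : l = j
      · subst h
        rw [if_pos rfl, I_diag]; ring
      · rw [if_neg h, I_offdiag (Ne.symm h), mul_zero]
    simp only [h3]
    simp
  simp only [h2]
  rw [← Finset.sum_mul]
variable {d m : ℕ}

lemma abs_dot_le {u : Fin d → ℝ} (hu : ∑ j, (u j) ^ 2 ≤ 1) (x : Fin d → ℝ) :
    |dot u x| ≤ ∑ j, |x j| := by
  rw [dot]
  refine (Finset.abs_sum_le_sum_abs _ _).trans (Finset.sum_le_sum fun j _ => ?_)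
  rw [abs_mul]
  have h1 : (u j) ^ 2 ≤ 1 :=
    le_trans (Finset.single_le_sum (fun i _ => sq_nonneg (u i)) (mem_univ j)) hu
  have h2 : |u j| ≤ 1 := (sq_le_one_iff_abs_le_one _).mp h1
  calc |u j| * |x j| ≤ 1 * |x j| := mul_le_mul_of_nonneg_right h2 (abs_nonneg _)
    _ = |x j| := one_mul _

lemma abs_snoc_dot_le {w : Fin m → Fin d → ℝ} (hw : ∀ i, ∑ j, (w i j) ^ 2 ≤ 1)
    (i : Fin (m + 1)) (x : Fin d → ℝ) :
    |dot ((Fin.snoc w 0 : Fin (m+1) → Fin d → ℝ) i) x| ≤ ∑ j, |x j| := by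
  refine Fin.lastCases ?_ (fun i' => ?_) i
  · rw [Fin.snoc_last]
    have : dot (0 : Fin d → ℝ) x = 0 := by
      simp [dot]
    rw [this, abs_zero]
    exact Finset.sum_nonneg fun j _ => abs_nonneg _
  · rw [Fin.snoc_castSucc]
    exact abs_dot_le (hw i') x

lemma denom_pos (v : Fin (m + 1) → Fin d → ℝ) (x : Fin d → ℝ) :
    0 < ∑ j, Real.exp (dot (v j) x) :=
  Finset.sum_pos (fun j _ => Real.exp_pos _) ⟨0, mem_univ 0⟩

lemma softmaxP_nonneg (w : Fin m → Fin d → ℝ) (i : Fin (m + 1)) (x : Fin d → ℝ) :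
    0 ≤ softmaxP w i x :=
  div_nonneg (Real.exp_pos _).le (denom_pos _ x).le

lemma sum_softmaxP (w : Fin m → Fin d → ℝ) (x : Fin d → ℝ) :
    ∑ i, softmaxP w i x = 1 := by
  unfold softmaxP softmax
  rw [← Finset.sum_div]
  exact div_self (denom_pos _ x).ne'

lemma softmaxP_le_one (w : Fin m → Fin d → ℝ) (i : Fin (m + 1)) (x : Fin d → ℝ) :
    softmaxP w i x ≤ 1 := by
  rw [← sum_softmaxP w x]
  exact Finset.single_le_sum (fun j _ => softmaxP_nonneg w j x) (mem_univ i)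

lemma softmaxP_ge {w : Fin m → Fin d → ℝ} (hw : ∀ i, ∑ j, (w i j) ^ 2 ≤ 1)
    (i : Fin (m + 1)) (x : Fin d → ℝ) :
    Real.exp (-(2 * ∑ j, |x j|)) / ((m : ℝ) + 1) ≤ softmaxP w i x := by
  set S := ∑ j, |x j| with hS
  have hS0 : 0 ≤ S := Finset.sum_nonneg fun j _ => abs_nonneg _
  unfold softmaxP softmax
  rw [div_le_div_iff₀ (by positivity) (denom_pos _ x)]
  have hDle : ∑ j, Real.exp (dot ((Fin.snoc w 0 : Fin (m+1) → Fin d → ℝ) j) x) ≤ ((m : ℝ) + 1) * Real.exp S := by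
    calc ∑ j, Real.exp (dot ((Fin.snoc w 0 : Fin (m+1) → Fin d → ℝ) j) x)
        ≤ ∑ _j : Fin (m + 1), Real.exp S :=
          Finset.sum_le_sum fun j _ => Real.exp_le_exp.mpr
            (le_of_abs_le (abs_snoc_dot_le hw j x))
      _ = ((m : ℝ) + 1) * Real.exp S := by
          rw [Finset.sum_const, Finset.card_univ, Fintype.card_fin, nsmul_eq_mul]
          push_cast; ring
  calc Real.exp (-(2 * S)) * ∑ j, Real.exp (dot ((Fin.snoc w 0 : Fin (m+1) → Fin d → ℝ) j) x)
      ≤ Real.exp (-(2 * S)) * (((m : ℝ) + 1) * Real.exp S) :=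
        mul_le_mul_of_nonneg_left hDle (Real.exp_pos _).le
    _ = ((m : ℝ) + 1) * Real.exp (-S) := by
        rw [← mul_assoc, mul_comm (Real.exp (-(2*S))) ((m:ℝ)+1), mul_assoc, ← Real.exp_add]
        ring_nf
    _ ≤ Real.exp (dot ((Fin.snoc w 0 : Fin (m+1) → Fin d → ℝ) i) x) * ((m : ℝ) + 1) := by
        rw [mul_comm]
        refine mul_le_mul_of_nonneg_right ?_ (by positivity)
        exact Real.exp_le_exp.mpr (neg_le_of_abs_le (abs_snoc_dot_le hw i x))

/-- quadratic-form lower bound -/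
lemma quad_form_ge {q t : Fin m → ℝ} {ε : ℝ} (hε : 0 < ε) (hq : ∀ i, ε ≤ q i)
    (hsum : ∑ i, q i ≤ 1 - ε) :
    ε ^ 2 * ∑ i, (t i) ^ 2 ≤
      (∑ i, q i * (1 - q i) * (t i) ^ 2)
        - ∑ i, ∑ j ∈ univ.erase i, q i * q j * (t i * t j) := by
  have hq0 : ∀ i, 0 ≤ q i := fun i => hε.le.trans (hq i)
  have expand : (∑ i, q i * t i) ^ 2
      = ∑ i, (q i * t i) ^ 2 + ∑ i, ∑ j ∈ univ.erase i, q i * q j * (t i * t j) := by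
    rw [sq, Finset.sum_mul_sum, ← Finset.sum_add_distrib]
    refine Finset.sum_congr rfl fun i _ => ?_
    have h := Finset.add_sum_erase univ (fun j => (q i * t i) * (q j * t j)) (mem_univ i)
    rw [← h]
    have : ∑ j ∈ univ.erase i, q i * t i * (q j * t j)
        = ∑ j ∈ univ.erase i, q i * q j * (t i * t j) :=
      Finset.sum_congr rfl fun j _ => by ring
    rw [this]; ring
  have e1 : ∑ i, q i * (1 - q i) * (t i) ^ 2
      = ∑ i, q i * (t i) ^ 2 - ∑ i, (q i * t i) ^ 2 := by
    rw [← Finset.sum_sub_distrib]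
    exact Finset.sum_congr rfl fun i _ => by ring
  have CS : (∑ i, q i * t i) ^ 2 ≤ (∑ i, q i) * ∑ i, q i * (t i) ^ 2 := by
    have h := Finset.sum_mul_sq_le_sq_mul_sq univ
      (fun i => Real.sqrt (q i)) (fun i => Real.sqrt (q i) * t i)
    have e2 : ∑ i, Real.sqrt (q i) * (Real.sqrt (q i) * t i) = ∑ i, q i * t i :=
      Finset.sum_congr rfl fun i _ => by
        rw [← mul_assoc, Real.mul_self_sqrt (hq0 i)]
    have e3 : ∑ i, Real.sqrt (q i) ^ 2 = ∑ i, q i :=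
      Finset.sum_congr rfl fun i _ => Real.sq_sqrt (hq0 i)
    have e4 : ∑ i, (Real.sqrt (q i) * t i) ^ 2 = ∑ i, q i * (t i) ^ 2 :=
      Finset.sum_congr rfl fun i _ => by
        rw [mul_pow, Real.sq_sqrt (hq0 i)]
    rwa [e2, e3, e4] at h
  have hX0 : 0 ≤ ∑ i, q i * (t i) ^ 2 :=
    Finset.sum_nonneg fun i _ => mul_nonneg (hq0 i) (sq_nonneg _)
  have h2 : (∑ i, q i * t i) ^ 2 ≤ (1 - ε) * ∑ i, q i * (t i) ^ 2 :=
    CS.trans (mul_le_mul_of_nonneg_right hsum hX0)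
  have h4 : ε * ∑ i, (t i) ^ 2 ≤ ∑ i, q i * (t i) ^ 2 := by
    rw [Finset.mul_sum]
    exact Finset.sum_le_sum fun i _ => mul_le_mul_of_nonneg_right (hq i) (sq_nonneg _)
  have h5 : ε ^ 2 * ∑ i, (t i) ^ 2 ≤ ε * ∑ i, q i * (t i) ^ 2 := by
    calc ε ^ 2 * ∑ i, (t i) ^ 2 = ε * (ε * ∑ i, (t i) ^ 2) := by ring
      _ ≤ ε * ∑ i, q i * (t i) ^ 2 := mul_le_mul_of_nonneg_left h4 hε.le
  have hring : ∑ i, q i * (t i) ^ 2 - (1 - ε) * ∑ i, q i * (t i) ^ 2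
      = ε * ∑ i, q i * (t i) ^ 2 := by ring
  linarith [expand, e1, h2, h5, hring]

lemma prod_phi_eq {d : ℕ} (x : Fin d → ℝ) :
    ∏ r, phi (x r) = Real.exp (-(4 * ∑ r, |x r|)) := by
  unfold phi
  rw [← Real.exp_sum]
  congr 1
  rw [Finset.mul_sum, ← Finset.sum_neg_distrib]

lemma pointwise_bound {d m : ℕ} {w : Fin m → Fin d → ℝ} (hw : ∀ i, ∑ j, (w i j) ^ 2 ≤ 1)
    (a : Fin m → Fin d → ℝ) (x : Fin d → ℝ) :
    (1 / ((m : ℝ) + 1) ^ 2) * ((∏ r, phi (x r)) * ∑ i, (dot (a i) x) ^ 2)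
      ≤ (∑ i : Fin m, softmaxP w i.castSucc x * (1 - softmaxP w i.castSucc x)
            * (dot (a i) x) ^ 2)
        - ∑ i : Fin m, ∑ j ∈ univ.erase i,
            softmaxP w i.castSucc x * softmaxP w j.castSucc x
              * (dot (a i) x * dot (a j) x) := by
  set S := ∑ r, |x r| with hS
  set ε := Real.exp (-(2 * S)) / ((m : ℝ) + 1) with hε
  have hε0 : 0 < ε := by positivity
  have hq : ∀ i : Fin m, ε ≤ softmaxP w i.castSucc x := fun i => softmaxP_ge hw _ x
  have hsum : ∑ i : Fin m, softmaxP w i.castSucc x ≤ 1 - ε := by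
    have h1 := sum_softmaxP w x
    rw [Fin.sum_univ_castSucc] at h1
    have h2 := softmaxP_ge hw (Fin.last m) x
    linarith
  have key := quad_form_ge (t := fun i => dot (a i) x) hε0 hq hsum
  refine le_trans (le_of_eq ?_) key
  rw [prod_phi_eq]
  have hexp : Real.exp (-(2 * S)) ^ 2 = Real.exp (-(4 * S)) := by
    rw [sq, ← Real.exp_add]; ring_nf
  have hε2 : ε ^ 2 = Real.exp (-(4 * S)) / ((m : ℝ) + 1) ^ 2 := by
    rw [hε, div_pow, hexp]
  rw [hε2]
  ring

lemma cont_dot {d : ℕ} (u : Fin d → ℝ) : Continuous fun x : Fin d → ℝ => dot u x := by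
  unfold dot; fun_prop

lemma cont_softmaxP {d m : ℕ} (w : Fin m → Fin d → ℝ) (i : Fin (m + 1)) :
    Continuous fun x : Fin d → ℝ => softmaxP w i x := by
  unfold softmaxP softmax
  refine Continuous.div ?_ ?_ fun x => (denom_pos _ x).ne'
  · exact Real.continuous_exp.comp (cont_dot _)
  · exact continuous_finset_sum _ fun j _ => Real.continuous_exp.comp (cont_dot _)

lemma abs_mul_le_avg (s u : ℝ) : |s * u| ≤ (s ^ 2 + u ^ 2) / 2 := by
  rw [abs_mul]
  nlinarith [sq_nonneg (|s| - |u|), sq_abs s, sq_abs u, abs_nonneg s, abs_nonneg u]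

lemma integrable_F {d m : ℕ} (w a : Fin m → Fin d → ℝ) :
    Integrable (fun x =>
      (∑ i : Fin m, softmaxP w i.castSucc x * (1 - softmaxP w i.castSucc x)
          * (dot (a i) x) ^ 2)
        - ∑ i : Fin m, ∑ j ∈ univ.erase i,
            softmaxP w i.castSucc x * softmaxP w j.castSucc x
              * (dot (a i) x * dot (a j) x)) (stdGaussian d) := by
  have hG : Integrable (fun x : Fin d → ℝ =>
      ∑ i : Fin m, ∑ j : Fin m, ((dot (a i) x) ^ 2 + (dot (a j) x) ^ 2) / 2) (stdGaussian d) :=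
    integrable_finset_sum _ fun i _ => integrable_finset_sum _ fun j _ =>
      ((integrable_dot_sq (a i)).add (integrable_dot_sq (a j))).div_const 2
  refine Integrable.mono' hG ?_ ?_
  · refine Continuous.aestronglyMeasurable (Continuous.sub ?_ ?_)
    · exact continuous_finset_sum _ fun i _ =>
        ((cont_softmaxP w i.castSucc).mul
          (continuous_const.sub (cont_softmaxP w i.castSucc))).mul ((cont_dot (a i)).pow 2)
    · exact continuous_finset_sum _ fun i _ => continuous_finset_sum _ fun j _ =>
        ((cont_softmaxP w i.castSucc).mul (cont_softmaxP w j.castSucc)).mul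
          ((cont_dot (a i)).mul (cont_dot (a j)))
  · filter_upwards with x
    rw [Real.norm_eq_abs]
    set t : Fin m → ℝ := fun i => dot (a i) x with ht
    set q : Fin m → ℝ := fun i => softmaxP w i.castSucc x with hqdef
    have hq0 : ∀ i, 0 ≤ q i := fun i => softmaxP_nonneg w _ x
    have hq1 : ∀ i, q i ≤ 1 := fun i => softmaxP_le_one w _ x
    have hA : |∑ i, q i * (1 - q i) * (t i) ^ 2| ≤ ∑ i, (t i) ^ 2 := by
      refine (Finset.abs_sum_le_sum_abs _ _).trans (Finset.sum_le_sum fun i _ => ?_)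
      rw [abs_mul, abs_of_nonneg (sq_nonneg (t i))]
      have hcoef : |q i * (1 - q i)| ≤ 1 := by
        rw [abs_mul, abs_of_nonneg (hq0 i)]
        nlinarith [hq0 i, hq1 i, abs_nonneg (1 - q i),
          abs_of_nonneg (sub_nonneg.mpr (hq1 i))]
      nlinarith [sq_nonneg (t i)]
    have hB : |∑ i, ∑ j ∈ univ.erase i, q i * q j * (t i * t j)|
        ≤ ∑ i, ∑ j ∈ univ.erase i, ((t i) ^ 2 + (t j) ^ 2) / 2 := by
      refine (Finset.abs_sum_le_sum_abs _ _).trans (Finset.sum_le_sum fun i _ => ?_)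
      refine (Finset.abs_sum_le_sum_abs _ _).trans (Finset.sum_le_sum fun j _ => ?_)
      rw [abs_mul]
      calc |q i * q j| * |t i * t j| ≤ 1 * |t i * t j| := by
            refine mul_le_mul_of_nonneg_right ?_ (abs_nonneg _)
            rw [abs_mul, abs_of_nonneg (hq0 i), abs_of_nonneg (hq0 j)]
            nlinarith [hq0 i, hq1 i, hq0 j, hq1 j]
        _ = |t i * t j| := one_mul _
        _ ≤ ((t i) ^ 2 + (t j) ^ 2) / 2 := abs_mul_le_avg _ _
    have hGx : ∑ i, ∑ j : Fin m, ((t i) ^ 2 + (t j) ^ 2) / 2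
        = ∑ i, (t i) ^ 2 + ∑ i, ∑ j ∈ univ.erase i, ((t i) ^ 2 + (t j) ^ 2) / 2 := by
      rw [← Finset.sum_add_distrib]
      refine Finset.sum_congr rfl fun i _ => ?_
      rw [← Finset.add_sum_erase univ (fun j => ((t i) ^ 2 + (t j) ^ 2) / 2) (mem_univ i)]
      ring
    have habs : |(∑ i, q i * (1 - q i) * (t i) ^ 2)
        - ∑ i, ∑ j ∈ univ.erase i, q i * q j * (t i * t j)|
        ≤ |∑ i, q i * (1 - q i) * (t i) ^ 2|
          + |∑ i, ∑ j ∈ univ.erase i, q i * q j * (t i * t j)| := by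
      rw [sub_eq_add_neg]
      exact (abs_add_le _ _).trans (by rw [abs_neg])
    linarith

lemma integrable_phi_dot_sq {d : ℕ} (u : Fin d → ℝ) :
    Integrable (fun x => (∏ r, phi (x r)) * (dot u x) ^ 2) (stdGaussian d) := by
  refine Integrable.mono' (integrable_dot_sq u) ?_ ?_
  · exact ((continuous_finset_prod _ fun r _ => phi_cont.comp (continuous_apply r)).mul
      ((cont_dot u).pow 2)).aestronglyMeasurable
  · filter_upwards with x
    rw [Real.norm_eq_abs, abs_of_nonneg
      (mul_nonneg (Finset.prod_nonneg fun r _ => (phi_pos _).le) (sq_nonneg _))]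
    have h1 : ∏ r, phi (x r) ≤ 1 :=
      Finset.prod_le_one (fun r _ => (phi_pos _).le) fun r _ => phi_le_one _
    nlinarith [sq_nonneg (dot u x), Finset.prod_nonneg
      (fun r (_ : r ∈ (univ : Finset (Fin d))) => (phi_pos (x r)).le)]

/-- uniform strong concavity of the population EM surrogate for the
`k`-expert softmax gating (`k = m+1 ≥ 2`): there is `λ > 0` such that for all gating
parameters in the unit balls and all directions `a` with `Σᵢ‖aᵢ‖² = 1`, the expected
quadratic form of the negative Hessian is at least `λ`. -/
theorem softmax_EM_uniform_strong_concavity {d m : ℕ} (hm : 1 ≤ m) :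
    ∃ lam : ℝ, 0 < lam ∧
      ∀ w : Fin m → Fin d → ℝ, (∀ i, ∑ j, (w i j) ^ 2 ≤ 1) →
      ∀ a : Fin m → Fin d → ℝ, (∑ i, ∑ j, (a i j) ^ 2 = 1) →
        lam ≤ ∫ x,
          ((∑ i : Fin m, softmaxP w i.castSucc x * (1 - softmaxP w i.castSucc x)
              * (dot (a i) x) ^ 2)
            - ∑ i : Fin m, ∑ j ∈ univ.erase i,
                softmaxP w i.castSucc x * softmaxP w j.castSucc x
                  * (dot (a i) x * dot (a j) x)) ∂(stdGaussian d) := by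
  refine ⟨cg * Cg ^ d / ((m : ℝ) + 1) ^ 2,
    div_pos (mul_pos cg_pos (pow_pos Cg_pos d)) (by positivity), ?_⟩
  intro w hw a ha
  have hmono := integral_mono_of_nonneg
    (f := fun x => (1 / ((m : ℝ) + 1) ^ 2) * ((∏ r, phi (x r)) * ∑ i, (dot (a i) x) ^ 2))
    (ae_of_all _ fun x => mul_nonneg (by positivity)
      (mul_nonneg (Finset.prod_nonneg fun r _ => (phi_pos _).le)
        (Finset.sum_nonneg fun i _ => sq_nonneg _)))
    (integrable_F w a)
    (ae_of_all _ fun x => pointwise_bound hw a x)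
  have hgeq : ∫ x, (1 / ((m : ℝ) + 1) ^ 2) * ((∏ r, phi (x r)) * ∑ i, (dot (a i) x) ^ 2)
      ∂(stdGaussian d) = (1 / ((m : ℝ) + 1) ^ 2) * (cg * Cg ^ (d - 1)) := by
    rw [MeasureTheory.integral_const_mul]
    congr 1
    have h1 : (fun x : Fin d → ℝ => (∏ r, phi (x r)) * ∑ i, (dot (a i) x) ^ 2)
        = fun x => ∑ i, (∏ r, phi (x r)) * (dot (a i) x) ^ 2 := by
      funext x; rw [Finset.mul_sum]
    rw [h1, integral_finset_sum _ fun i _ => integrable_phi_dot_sq (a i)]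
    simp only [gaussMomentPhi]
    rw [← Finset.sum_mul, ha, one_mul]
  rw [hgeq] at hmono
  refine le_trans ?_ hmono
  have hpow : Cg ^ d ≤ Cg ^ (d - 1) :=
    pow_le_pow_of_le_one Cg_pos.le Cg_le_one (Nat.sub_le d 1)
  have hmul : cg * Cg ^ d ≤ cg * Cg ^ (d - 1) :=
    mul_le_mul_of_nonneg_left hpow cg_pos.le
  calc cg * Cg ^ d / ((m : ℝ) + 1) ^ 2
      = (1 / ((m : ℝ) + 1) ^ 2) * (cg * Cg ^ d) := by ring
    _ ≤ (1 / ((m : ℝ) + 1) ^ 2) * (cg * Cg ^ (d - 1)) :=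
        mul_le_mul_of_nonneg_left hmul (by positivity)

end
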